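/- For complex parameters with $\mathrm{Re}\,c > \mathrm{Re}\,b > 0$ and $x \in \mathbb{C}\setminus[1,\infty)$, the Gauss hypergeometric function satisfies Euler's integral representation: ${}_2F_1(a,b;c;x) = \frac{\Gamma(c)}{\Gamma(b)\Gamma(c-b)}\int_0^1 t^{b-1}(1-t)^{c-b-1}(1-xt)^{-a}\,dt$. -/

import Mathlib

open MeasureTheory
/-- The Gauss hypergeometric series `₂F₁(a,b;c;x) = ∑ (a)_k (b)_k / ((c)_k k!) x^k`. -/
noncomputable def hyp2F1Series (a b c x : ℂ) : ℂ :=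
  ∑' k : ℕ, ((ascPochhammer ℂ k).eval a * (ascPochhammer ℂ k).eval b
    / ((ascPochhammer ℂ k).eval c * (k.factorial : ℂ))) * x ^ k

/-- `F` is (the analytic continuation of) the Gauss hypergeometric function `₂F₁(a,b;c;·)`
on `ℂ \ [1,∞)`: it is holomorphic off the cut `[1,∞)` and agrees with the Gauss series
on the unit disc. -/
def IsHyp2F1 (a b c : ℂ) (F : ℂ → ℂ) : Prop :=
  DifferentiableOn ℂ F {z : ℂ | z.im ≠ 0 ∨ z.re < 1} ∧
    ∀ x : ℂ, ‖x‖ < 1 → F x = hyp2F1Series a b c x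


section EulerAux
open MeasureTheory Complex Set


lemma poch_growth (a : ℂ) (k : ℕ) :
    ‖(ascPochhammer ℂ k).eval a‖ ≤ k.factorial * ((k : ℝ) + 1) ^ (⌈‖a‖⌉₊) := by
  set M := ⌈‖a‖⌉₊ with hM
  induction k with
  | zero => simp
  | succ k ih =>
    rw [ascPochhammer_succ_eval]
    have h1 : ‖(ascPochhammer ℂ k).eval a * (a + k)‖
        ≤ (k.factorial * ((k : ℝ) + 1) ^ M) * (‖a‖ + k) := by
      rw [norm_mul]
      exact mul_le_mul ih ((norm_add_le _ _).trans (by simp)) (norm_nonneg _) (by positivity)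
    refine h1.trans ?_
    have key : ((k : ℝ) + 1) ^ M * (‖a‖ + k) ≤ ((k : ℝ) + 1) * (((k : ℝ) + 1) + 1) ^ M := by
      have hb : (1 : ℝ) + (M : ℝ) * (1 / ((k : ℝ) + 1)) ≤ (1 + 1 / ((k : ℝ) + 1)) ^ M := by
        apply one_add_mul_le_pow
        have : (0:ℝ) ≤ 1 / ((k:ℝ)+1) := by positivity
        linarith
      have h2 : (((k : ℝ) + 1) + 1) ^ M = ((k:ℝ)+1) ^ M * (1 + 1/((k:ℝ)+1)) ^ M := by
        rw [← mul_pow]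
        congr 1
        field_simp
      rw [h2]
      have h3 : ‖a‖ + k ≤ ((k:ℝ)+1) * (1 + (M : ℝ) * (1 / ((k : ℝ) + 1))) := by
        have h4 : ‖a‖ ≤ M + 1 := by
          have := Nat.le_ceil ‖a‖
          push_cast at this ⊢
          try linarith
        have h5 : ((k:ℝ)+1) * (1 + (M : ℝ) * (1 / ((k : ℝ) + 1))) = (k+1) + M := by
          field_simp; try ring
        rw [h5]; linarith
      calc ((k : ℝ) + 1) ^ M * (‖a‖ + k)
          ≤ ((k : ℝ) + 1) ^ M * (((k:ℝ)+1) * (1 + (M : ℝ) * (1 / ((k : ℝ) + 1)))) := by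
            exact mul_le_mul_of_nonneg_left h3 (by positivity)
        _ ≤ ((k : ℝ) + 1) ^ M * (((k:ℝ)+1) * (1 + 1 / ((k : ℝ) + 1)) ^ M) := by
            refine mul_le_mul_of_nonneg_left ?_ (by positivity)
            exact mul_le_mul_of_nonneg_left hb (by positivity)
        _ = ((k:ℝ)+1) * (((k:ℝ)+1) ^ M * (1 + 1/((k:ℝ)+1)) ^ M) := by ring
    calc (k.factorial * ((k : ℝ) + 1) ^ M) * (‖a‖ + k)
        = (k.factorial : ℝ) * (((k : ℝ) + 1) ^ M * (‖a‖ + k)) := by ring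
      _ ≤ (k.factorial : ℝ) * (((k : ℝ) + 1) * (((k : ℝ) + 1) + 1) ^ M) := by
          exact mul_le_mul_of_nonneg_left key (by positivity)
      _ = ((k+1).factorial : ℝ) * (((k+1 : ℕ) : ℝ) + 1) ^ M := by
          rw [Nat.factorial_succ]; push_cast; ring

lemma summable_poly_geom (N : ℕ) {r : ℝ} (h0 : 0 ≤ r) (hr : r < 1) :
    Summable (fun k : ℕ => ((k : ℝ) + 2) ^ N * r ^ k) := by
  have heq : (fun k : ℕ => ((k : ℝ) + 2) ^ N * r ^ k)
      = fun k : ℕ => ∑ i ∈ Finset.range (N + 1),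
        ((k:ℝ) ^ i * 2 ^ (N - i) * (N.choose i)) * r ^ k := by
    funext k
    rw [← Finset.sum_mul, ← add_pow]
  rw [heq]
  apply summable_sum
  intro i hi
  have : Summable (fun k : ℕ => (k:ℝ) ^ i * r ^ k) := by
    have := summable_pow_mul_geometric_of_norm_lt_one (R := ℝ) (k := i) (r := r)
      (by rwa [Real.norm_eq_abs, _root_.abs_of_nonneg h0])
    exact this
  have := (this.mul_left ((2:ℝ) ^ (N - i) * (N.choose i)))
  refine this.congr fun k => by ring

-- summability of pochhammer-type terms against geometric
lemma summable_poch_geom (a : ℂ) (j : ℕ) {r : ℝ} (h0 : 0 ≤ r) (hr : r < 1) :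
    Summable (fun k : ℕ => ‖(ascPochhammer ℂ k).eval a‖ / k.factorial * ((k:ℝ)+1) ^ j * r ^ k) := by
  set M := ⌈‖a‖⌉₊
  refine Summable.of_nonneg_of_le (fun k => by positivity) (fun k => ?_)
    (summable_poly_geom (M + j) h0 hr)
  have h1 : ‖(ascPochhammer ℂ k).eval a‖ / k.factorial ≤ ((k:ℝ)+1) ^ M := by
    rw [div_le_iff₀ (by positivity)]
    calc ‖(ascPochhammer ℂ k).eval a‖ ≤ k.factorial * ((k : ℝ) + 1) ^ M := poch_growth a k
      _ = ((k:ℝ)+1) ^ M * k.factorial := by ring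
  calc ‖(ascPochhammer ℂ k).eval a‖ / k.factorial * ((k:ℝ)+1) ^ j * r ^ k
      ≤ ((k:ℝ)+1) ^ M * ((k:ℝ)+1) ^ j * r ^ k := by
        refine mul_le_mul_of_nonneg_right (mul_le_mul_of_nonneg_right h1 (by positivity))
          (by positivity)
    _ = ((k:ℝ)+1) ^ (M + j) * r ^ k := by rw [pow_add]
    _ ≤ ((k:ℝ)+2) ^ (M + j) * r ^ k := by
        refine mul_le_mul_of_nonneg_right (pow_le_pow_left₀ (by positivity) (by linarith) _)
          (by positivity)

lemma norm_poch_coeff (a : ℂ) (k : ℕ) :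
    ‖(ascPochhammer ℂ k).eval a / k.factorial‖ = ‖(ascPochhammer ℂ k).eval a‖ / k.factorial := by
  rw [norm_div]
  norm_num

lemma poch_coeff_le (a : ℂ) (k : ℕ) :
    ‖(ascPochhammer ℂ k).eval a / k.factorial‖ ≤ ((k:ℝ) + 1) ^ (⌈‖a‖⌉₊) := by
  rw [norm_poch_coeff, div_le_iff₀ (by positivity)]
  calc ‖(ascPochhammer ℂ k).eval a‖ ≤ k.factorial * ((k : ℝ) + 1) ^ (⌈‖a‖⌉₊) := poch_growth a k
    _ = ((k:ℝ) + 1) ^ (⌈‖a‖⌉₊) * k.factorial := by ring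

lemma summable_binom_coeff (a : ℂ) {w : ℂ} (hw : ‖w‖ < 1) :
    Summable (fun k : ℕ => (ascPochhammer ℂ k).eval a / k.factorial * w ^ k) := by
  refine Summable.of_norm_bounded
    (g := fun k => ‖(ascPochhammer ℂ k).eval a‖ / k.factorial * ‖w‖ ^ k)
    ((summable_poch_geom a 0 (norm_nonneg w) hw).congr (fun k => by simp)) (fun k => ?_)
  exact le_of_eq (by rw [norm_mul, norm_poch_coeff, norm_pow])

lemma summable_norm_deriv_coeff (a : ℂ) {ρ : ℝ} (h0 : 0 ≤ ρ) (hρ : ρ < 1) :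
    Summable fun k : ℕ =>
      ‖(ascPochhammer ℂ k).eval a / k.factorial‖ * ((k:ℝ) * ρ ^ (k-1)) := by
  set M := ⌈‖a‖⌉₊ with hM
  rw [← summable_nat_add_iff 1]
  refine Summable.of_nonneg_of_le (fun k => by positivity) (fun k => ?_)
    (summable_poly_geom (M + 1) h0 hρ)
  have h1 : ‖(ascPochhammer ℂ (k+1)).eval a / (k+1).factorial‖ ≤ ((k:ℝ) + 2) ^ M := by
    refine (poch_coeff_le a (k+1)).trans (le_of_eq ?_)
    push_cast; ring
  have h2 : ((k + 1 : ℕ) : ℝ) * ρ ^ (k + 1 - 1) ≤ ((k:ℝ) + 2) * ρ ^ k := by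
    simp only [Nat.add_sub_cancel]
    push_cast
    refine mul_le_mul_of_nonneg_right (by linarith) (by positivity)
  calc ‖(ascPochhammer ℂ (k+1)).eval a / (k+1).factorial‖ * (((k+1:ℕ):ℝ) * ρ ^ (k+1-1))
      ≤ ((k:ℝ) + 2) ^ M * (((k:ℝ)+2) * ρ ^ k) :=
        mul_le_mul h1 h2 (by positivity) (by positivity)
    _ = ((k:ℝ) + 2) ^ (M + 1) * ρ ^ k := by rw [pow_succ]; ring

lemma summable_deriv_coeff (a : ℂ) {w : ℂ} (hw : ‖w‖ < 1) :
    Summable fun k : ℕ =>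
      (ascPochhammer ℂ k).eval a / k.factorial * ((k:ℂ) * w ^ (k-1)) := by
  refine Summable.of_norm (((summable_norm_deriv_coeff a (norm_nonneg w) hw).congr
    (fun k => ?_)))
  rw [norm_mul, norm_mul, norm_pow]
  norm_num

lemma poch_coeff_succ (a : ℂ) (k : ℕ) :
    (ascPochhammer ℂ (k+1)).eval a / (k+1).factorial * ((k:ℂ) + 1)
      = (ascPochhammer ℂ k).eval a / k.factorial * (a + k) := by
  rw [ascPochhammer_succ_eval]
  have h1 : (((k+1).factorial : ℕ) : ℂ) = ((k:ℂ) + 1) * k.factorial := by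
    rw [Nat.factorial_succ]; push_cast; ring
  rw [h1]
  have h2 : ((k:ℂ) + 1) ≠ 0 := by
    exact_mod_cast Nat.cast_add_one_ne_zero (R := ℂ) k
  have h3 : ((k.factorial : ℕ) : ℂ) ≠ 0 := by
    exact_mod_cast Nat.cast_ne_zero.mpr k.factorial_ne_zero
  field_simp

lemma binomial_hasSum (a : ℂ) {z : ℂ} (hz : ‖z‖ < 1) :
    HasSum (fun k : ℕ => (ascPochhammer ℂ k).eval a / k.factorial * z ^ k) ((1 - z) ^ (-a)) := by
  set c : ℕ → ℂ := fun k => (ascPochhammer ℂ k).eval a / k.factorial with hc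
  set r : ℝ := (‖z‖ + 1) / 2 with hr
  have hzr : ‖z‖ < r := by rw [hr]; linarith
  have hr0 : 0 < r := lt_of_le_of_lt (norm_nonneg z) hzr
  have hr1 : r < 1 := by rw [hr]; linarith
  set u : ℕ → ℝ := fun k => ‖c k‖ * ((k:ℝ) * r ^ (k - 1)) with hu
  have hu_sum : Summable u := summable_norm_deriv_coeff a hr0.le hr1
  have hg0 : Summable fun k => c k * (0:ℂ) ^ k := summable_binom_coeff a (by norm_num)
  have hterm : ∀ (k : ℕ) (w : ℂ), HasDerivAt (fun w => c k * w ^ k) (c k * (k * w ^ (k-1))) w :=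
    fun k w => (hasDerivAt_pow k w).const_mul (c k)
  have hbound : ∀ (k : ℕ) (w : ℂ), w ∈ Metric.ball (0:ℂ) r → ‖c k * (k * w ^ (k-1))‖ ≤ u k := by
    intro k w hwm
    rw [mem_ball_zero_iff] at hwm
    rw [norm_mul, norm_mul, norm_pow]
    have h1 : ‖(k : ℂ)‖ = (k : ℝ) := by simp
    rw [h1]
    have h2 : ‖w‖ ^ (k-1) ≤ r ^ (k-1) := pow_le_pow_left₀ (norm_nonneg w) hwm.le _
    exact mul_le_mul_of_nonneg_left (mul_le_mul_of_nonneg_left h2 (Nat.cast_nonneg k))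
      (norm_nonneg _)
  set g : ℂ → ℂ := fun w => ∑' k, c k * w ^ k with hg
  set D : ℂ → ℂ := fun w => ∑' k, c k * (k * w ^ (k-1)) with hD
  have hderiv : ∀ w ∈ Metric.ball (0:ℂ) r, HasDerivAt g (D w) w := fun w hw =>
    hasDerivAt_tsum_of_isPreconnected hu_sum Metric.isOpen_ball
      (convex_ball (0:ℂ) r).isPreconnected (fun k y _ => hterm k y) hbound
      (Metric.mem_ball_self hr0) hg0 hw
  -- the ODE identity
  have hIDENT : ∀ w : ℂ, ‖w‖ < 1 → (1 - w) * D w = a * g w := by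
    intro w hw
    have S1 : Summable fun k => c k * w ^ k := summable_binom_coeff a hw
    have S2 : Summable fun k => c k * ((k:ℂ) * w ^ (k-1)) := summable_deriv_coeff a hw
    have S3 : Summable fun k => c k * (k:ℂ) * w ^ k := by
      refine (S2.mul_left w).congr (fun k => ?_)
      cases k with
      | zero => simp
      | succ k => simp only [Nat.add_sub_cancel]; push_cast; ring_nf
    have S2' : Summable fun k => c (k+1) * (((k:ℂ))+1) * w ^ k := by
      have := (summable_nat_add_iff (f := fun k => c k * ((k:ℂ) * w ^ (k-1))) 1).mpr S2
      refine this.congr (fun k => ?_)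
      simp only [Nat.add_sub_cancel]; push_cast; ring
    have hwD : w * D w = ∑' k, c k * (k:ℂ) * w ^ k := by
      rw [hD, ← tsum_mul_left]
      refine tsum_congr (fun k => ?_)
      cases k with
      | zero => simp
      | succ k => simp only [Nat.add_sub_cancel]; push_cast; ring
    have hDshift : D w = ∑' k, c (k+1) * (((k:ℂ))+1) * w ^ k := by
      rw [hD]
      simp only []
      rw [S2.tsum_eq_zero_add]
      simp only [Nat.cast_zero, zero_mul, mul_zero, zero_add, Nat.add_sub_cancel]
      refine tsum_congr (fun k => ?_)
      push_cast; ring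
    calc (1 - w) * D w = D w - w * D w := by ring
      _ = (∑' k, c (k+1) * (((k:ℂ))+1) * w ^ k) - ∑' k, c k * (k:ℂ) * w ^ k := by
          rw [hwD, hDshift]
      _ = ∑' k, (c (k+1) * (((k:ℂ))+1) * w ^ k - c k * (k:ℂ) * w ^ k) := (S2'.tsum_sub S3).symm
      _ = ∑' k, a * (c k * w ^ k) := by
          refine tsum_congr (fun k => ?_)
          have := poch_coeff_succ a k
          rw [hc]
          simp only
          rw [this]
          ring
      _ = a * g w := by rw [tsum_mul_left]
  -- (1-w)^a is nonvanishing and differentiable on the ball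
  have hslit : ∀ w : ℂ, ‖w‖ < 1 → (1 - w) ∈ slitPlane := by
    intro w hw
    refine mem_slitPlane_iff.mpr (Or.inl ?_)
    have : w.re ≤ ‖w‖ := re_le_norm w
    simp only [sub_re, one_re]
    linarith
  have hne : ∀ w : ℂ, ‖w‖ < 1 → (1 - w) ≠ 0 := fun w hw => slitPlane_ne_zero (hslit w hw)
  -- h := g * (1-·)^a has zero derivative on the ball
  set h : ℂ → ℂ := fun w => g w * (1 - w) ^ a with hh
  have hderiv0 : ∀ w ∈ Metric.ball (0:ℂ) r, HasDerivAt h 0 w := by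
    intro w hw
    have hw1 : ‖w‖ < 1 := lt_trans (mem_ball_zero_iff.mp hw) hr1
    have d1 : HasDerivAt (fun w : ℂ => (1 - w) ^ a) (a * (1 - w) ^ (a - 1) * (-1)) w :=
      HasDerivAt.cpow_const ((hasDerivAt_id w).const_sub 1) (hslit w hw1)
    have d2 := (hderiv w hw).mul d1
    have key : D w * (1 - w) ^ a + g w * (a * (1 - w) ^ (a - 1) * (-1)) = 0 := by
      have e1 : (1 - w) ^ a = (1 - w) ^ (a - 1) * (1 - w) := by
        rw [cpow_sub _ _ (hne w hw1), cpow_one]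
        exact (div_mul_cancel₀ _ (hne w hw1)).symm
      rw [e1]
      have e2 : D w * ((1 - w) ^ (a - 1) * (1 - w)) = (1 - w) ^ (a-1) * ((1 - w) * D w) := by
        ring
      rw [e2, hIDENT w hw1]
      ring
    rw [key] at d2
    exact d2
  -- h is constant on the ball, h 0 = 1
  have hconst : h z = h 0 := by
    refine Convex.is_const_of_fderivWithin_eq_zero (𝕜 := ℂ) (convex_ball (0:ℂ) r)
      (fun w hw => ((hderiv0 w hw).differentiableAt).differentiableWithinAt) ?_
      (mem_ball_zero_iff.mpr hzr) (Metric.mem_ball_self hr0)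
    intro w hw
    rw [fderivWithin_of_mem_nhds (Metric.isOpen_ball.mem_nhds hw)]
    have := (hderiv0 w hw).hasFDerivAt.fderiv
    rw [this]
    ext v
    simp
  have hg00 : g 0 = 1 := by
    rw [hg]
    simp only
    rw [tsum_eq_single 0 (fun k hk => by simp [zero_pow hk])]
    simp [hc]
  have hh0 : h 0 = 1 := by
    rw [hh]; simp [hg00]
  -- conclude
  have hgz : g z * (1 - z) ^ a = 1 := by
    have := hconst
    rw [hh0] at this
    exact this
  have hpow_ne : (1 - z) ^ a ≠ 0 := by
    intro hcon
    rcases (cpow_eq_zero_iff _ _).mp hcon with ⟨h1, _⟩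
    exact hne z hz h1
  have hgz' : g z = (1 - z) ^ (-a) := by
    rw [cpow_neg]
    field_simp at hgz ⊢
    linear_combination hgz
  have := (summable_binom_coeff a hz).hasSum
  rw [show (∑' k, (ascPochhammer ℂ k).eval a / k.factorial * z ^ k) = g z from rfl, hgz'] at this
  exact this

-- pointwise slit membership
lemma one_sub_mul_mem_slitPlane {x : ℂ} (hx : x.im ≠ 0 ∨ x.re < 1) {t : ℝ}
    (ht0 : 0 ≤ t) (ht1 : t ≤ 1) : (1 - x * t) ∈ slitPlane := by
  rw [mem_slitPlane_iff]
  rcases hx with h | h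
  · rcases eq_or_lt_of_le ht0 with h0 | h0
    · left; simp [← h0]
    · right
      simp only [sub_im, one_im, mul_im, ofReal_re, ofReal_im, mul_zero, add_zero, zero_sub,
        neg_ne_zero, zero_add, mul_zero]
      exact mul_ne_zero h (ne_of_gt h0)
  · left
    simp only [sub_re, one_re, mul_re, ofReal_re, ofReal_im, mul_zero, sub_zero]
    rcases le_or_gt x.re 0 with h2 | h2
    · nlinarith
    · nlinarith

-- the set S
lemma isOpen_S : IsOpen {z : ℂ | z.im ≠ 0 ∨ z.re < 1} := by
  have : {z : ℂ | z.im ≠ 0 ∨ z.re < 1}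
      = (Complex.im ⁻¹' {0})ᶜ ∪ Complex.re ⁻¹' Iio 1 := by
    ext z; simp [or_comm]
  rw [this]
  exact ((isClosed_singleton.preimage Complex.continuous_im).isOpen_compl).union
    (isOpen_Iio.preimage Complex.continuous_re)

lemma isPreconnected_S : IsPreconnected {z : ℂ | z.im ≠ 0 ∨ z.re < 1} := by
  have hstar : ∀ z ∈ {z : ℂ | z.im ≠ 0 ∨ z.re < 1}, ∀ t : ℝ, 0 ≤ t → t ≤ 1 →
      t • z ∈ {z : ℂ | z.im ≠ 0 ∨ z.re < 1} := by
    intro z hz t ht0 ht1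
    simp only [mem_setOf_eq] at hz ⊢
    rcases hz with h | h
    · rcases eq_or_lt_of_le ht0 with h0 | h0
      · right; simp [← h0]
      · left
        rw [real_smul]
        simp only [mul_im, ofReal_re, ofReal_im, zero_mul, add_zero]
        exact mul_ne_zero (ne_of_gt h0) h
    · right
      rw [real_smul]
      simp only [mul_re, ofReal_re, ofReal_im, zero_mul, sub_zero]
      rcases le_or_gt z.re 0 with h2 | h2
      · nlinarith
      · nlinarith
  have h0mem : (0 : ℂ) ∈ {z : ℂ | z.im ≠ 0 ∨ z.re < 1} := by simp
  have : IsPathConnected {z : ℂ | z.im ≠ 0 ∨ z.re < 1} := by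
    refine isPathConnected_iff.mpr ⟨⟨0, h0mem⟩, fun x hx y hy => ?_⟩
    have hseg : ∀ w ∈ {z : ℂ | z.im ≠ 0 ∨ z.re < 1},
        JoinedIn {z : ℂ | z.im ≠ 0 ∨ z.re < 1} w 0 := by
      intro w hw
      refine JoinedIn.of_segment_subset ?_
      rw [segment_eq_image]
      rintro p ⟨t, ht, rfl⟩
      simp only [smul_zero, add_zero]
      exact hstar w hw (1 - t) (by linarith [ht.2]) (by linarith [ht.1])
    exact (hseg x hx).trans (hseg y hy).symm
  exact this.isConnected.isPreconnected

-- uniform bound for cpow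
lemma norm_cpow_bound (s : ℂ) {w : ℂ} {δ R : ℝ} (hδ : 0 < δ) (h1 : δ ≤ ‖w‖) (h2 : ‖w‖ ≤ R) :
    ‖w ^ s‖ ≤ max (δ ^ s.re) (R ^ s.re) * Real.exp (Real.pi * |s.im|) := by
  have hw0 : w ≠ 0 := by
    intro h; rw [h, norm_zero] at h1; linarith
  have habs : ‖w ^ s‖ = ‖w‖ ^ s.re / Real.exp (Complex.arg w * s.im) :=
    Complex.norm_cpow_of_ne_zero hw0 s
  rw [habs]
  have hwpos : 0 < ‖w‖ := by
    linarith
  have hb : ‖w‖ ^ s.re ≤ max (δ ^ s.re) (R ^ s.re) := by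
    rcases le_or_gt 0 s.re with h | h
    · exact le_max_of_le_right (Real.rpow_le_rpow hwpos.le (by exact h2) h)
    · refine le_max_of_le_left (Real.rpow_le_rpow_of_nonpos hδ (by exact h1) h.le)
  have hexp : 1 / Real.exp (Complex.arg w * s.im) ≤ Real.exp (Real.pi * |s.im|) := by
    rw [one_div, ← Real.exp_neg]
    apply Real.exp_le_exp.mpr
    calc -(Complex.arg w * s.im) ≤ |Complex.arg w * s.im| := neg_le_abs _
      _ = |Complex.arg w| * |s.im| := abs_mul _ _
      _ ≤ Real.pi * |s.im| := by
          refine mul_le_mul_of_nonneg_right (Complex.abs_arg_le_pi w) (abs_nonneg _)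
  calc ‖w‖ ^ s.re / Real.exp (Complex.arg w * s.im)
      = ‖w‖ ^ s.re * (1 / Real.exp (Complex.arg w * s.im)) := by ring
    _ ≤ max (δ ^ s.re) (R ^ s.re) * Real.exp (Real.pi * |s.im|) := by
        refine mul_le_mul hb hexp (by positivity) (le_max_iff.mpr (Or.inl (by positivity)))

-- localization: uniform bounds on a closed ball inside S
lemma euler_localization {x₀ : ℂ} (hx₀ : x₀ ∈ {z : ℂ | z.im ≠ 0 ∨ z.re < 1}) :
    ∃ ε > 0, ∃ δ > 0, ∃ R : ℝ, Metric.closedBall x₀ ε ⊆ {z : ℂ | z.im ≠ 0 ∨ z.re < 1} ∧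
      ∀ x ∈ Metric.closedBall x₀ ε, ∀ t ∈ Icc (0:ℝ) 1,
        (1 - x * t) ∈ slitPlane ∧ δ ≤ ‖1 - x * t‖ ∧ ‖1 - x * t‖ ≤ R := by
  obtain ⟨ε, hε, hball⟩ := Metric.nhds_basis_closedBall.mem_iff.mp
    (isOpen_S.mem_nhds hx₀)
  have hKc : IsCompact ((Metric.closedBall x₀ ε) ×ˢ (Icc (0:ℝ) 1)) :=
    (isCompact_closedBall _ _).prod isCompact_Icc
  have hcont : ContinuousOn (fun p : ℂ × ℝ => ‖1 - p.1 * p.2‖)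
      ((Metric.closedBall x₀ ε) ×ˢ (Icc (0:ℝ) 1)) := by
    fun_prop
  have hpos : ∀ p ∈ (Metric.closedBall x₀ ε) ×ˢ (Icc (0:ℝ) 1),
      (0:ℝ) < ‖1 - p.1 * p.2‖ := by
    rintro ⟨x, t⟩ ⟨hxm, htm⟩
    have hx : x ∈ {z : ℂ | z.im ≠ 0 ∨ z.re < 1} := hball hxm
    have := one_sub_mul_mem_slitPlane hx htm.1 htm.2
    rw [norm_pos_iff]
    exact slitPlane_ne_zero this
  obtain ⟨δ, hδ0, hδ⟩ := hKc.exists_forall_le' hcont hpos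
  refine ⟨ε, hε, δ, hδ0, 1 + (‖x₀‖ + ε), hball, fun x hxm t htm => ?_⟩
  have hx : x ∈ {z : ℂ | z.im ≠ 0 ∨ z.re < 1} := hball hxm
  refine ⟨one_sub_mul_mem_slitPlane hx htm.1 htm.2, hδ ⟨x, t⟩ ⟨hxm, htm⟩, ?_⟩
  calc ‖1 - x * (t:ℂ)‖ ≤ ‖(1:ℂ)‖ + ‖x * (t:ℂ)‖ := norm_sub_le _ _
    _ ≤ 1 + (‖x₀‖ + ε) := by
        rw [norm_one]
        gcongr
        rw [norm_mul]
        have h1 : ‖x‖ ≤ ‖x₀‖ + ε := by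
          have := mem_closedBall_iff_norm.mp hxm
          calc ‖x‖ ≤ ‖x - x₀‖ + ‖x₀‖ := by
                have := norm_sub_norm_le x x₀; linarith [norm_sub_le x x₀]
            _ ≤ ‖x₀‖ + ε := by linarith
        have h2 : ‖(t:ℂ)‖ ≤ 1 := by
          rw [Complex.norm_real, Real.norm_eq_abs, _root_.abs_of_nonneg htm.1]
          exact htm.2
        calc ‖x‖ * ‖(t:ℂ)‖ ≤ (‖x₀‖ + ε) * 1 :=
              mul_le_mul h1 h2 (norm_nonneg _) (by positivity)
          _ = ‖x₀‖ + ε := by ring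

lemma poch_ne_zero {z : ℂ} (hz : 0 < z.re) (k : ℕ) : (ascPochhammer ℂ k).eval z ≠ 0 := by
  intro h
  obtain ⟨j, hj, hjz⟩ := (ascPochhammer_eval_eq_zero_iff k z).mp h
  have : ((j:ℂ)).re = (-z).re := by rw [hjz]
  simp only [natCast_re, neg_re] at this
  have : (0:ℝ) ≤ (j:ℝ) := Nat.cast_nonneg j
  linarith [this]

lemma Gamma_poch {z : ℂ} (hz : 0 < z.re) (k : ℕ) :
    Complex.Gamma (z + k) = (ascPochhammer ℂ k).eval z * Complex.Gamma z := by
  induction k with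
  | zero => simp
  | succ k ih =>
    have hne : z + (k:ℂ) ≠ 0 := by
      intro h
      have := congrArg Complex.re h
      simp only [add_re, natCast_re, zero_re] at this
      have h2 : (0:ℝ) ≤ (k:ℝ) := Nat.cast_nonneg k
      linarith
    have h1 : z + ((k+1 : ℕ):ℂ) = (z + k) + 1 := by push_cast; ring
    rw [h1, Complex.Gamma_add_one _ hne, ih, ascPochhammer_succ_eval]
    ring

lemma gamma_beta_coeff {b c : ℂ} (hb : 0 < b.re) (hcb : b.re < c.re) (k : ℕ) :
    Complex.Gamma c / (Complex.Gamma b * Complex.Gamma (c - b))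
      * Complex.betaIntegral (b + k) (c - b)
    = (ascPochhammer ℂ k).eval b / (ascPochhammer ℂ k).eval c := by
  have hc : 0 < c.re := lt_trans hb hcb
  have hbk : 0 < (b + (k:ℂ)).re := by
    simp only [add_re, natCast_re]
    have : (0:ℝ) ≤ (k:ℝ) := Nat.cast_nonneg k
    linarith
  have hcbre : 0 < (c - b).re := by simp only [sub_re]; linarith
  have hck : 0 < (c + (k:ℂ)).re := by
    simp only [add_re, natCast_re]
    have : (0:ℝ) ≤ (k:ℝ) := Nat.cast_nonneg k
    linarith
  have h1 : Complex.Gamma (b + k) * Complex.Gamma (c - b)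
      = Complex.Gamma (c + k) * Complex.betaIntegral (b + k) (c - b) := by
    have := Complex.Gamma_mul_Gamma_eq_betaIntegral hbk hcbre
    rwa [show b + (k:ℂ) + (c - b) = c + k by ring] at this
  rw [Gamma_poch hb k, Gamma_poch hc k] at h1
  have nb : Complex.Gamma b ≠ 0 := Complex.Gamma_ne_zero_of_re_pos hb
  have nc : Complex.Gamma c ≠ 0 := Complex.Gamma_ne_zero_of_re_pos hc
  have ncb : Complex.Gamma (c - b) ≠ 0 := Complex.Gamma_ne_zero_of_re_pos hcbre
  have npb : (ascPochhammer ℂ k).eval b ≠ 0 := poch_ne_zero hb k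
  have npc : (ascPochhammer ℂ k).eval c ≠ 0 := poch_ne_zero hc k
  have hck_ne : Complex.Gamma (c + k) ≠ 0 := Complex.Gamma_ne_zero_of_re_pos hck
  have hβ : Complex.betaIntegral (b + k) (c - b)
      = (ascPochhammer ℂ k).eval b * Complex.Gamma b * Complex.Gamma (c - b)
        / ((ascPochhammer ℂ k).eval c * Complex.Gamma c) := by
    rw [eq_div_iff (by exact mul_ne_zero npc nc)]
    linear_combination -h1
  rw [hβ]
  field_simp

section integrand
variable {b c : ℂ}

lemma integrable_phi (hb : 0 < b.re) (hcb : 0 < (c - b).re) :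
    IntegrableOn (fun t : ℝ => (t:ℂ) ^ (b-1) * (1 - (t:ℂ)) ^ (c-b-1)) (Ioo (0:ℝ) 1) := by
  have h := Complex.betaIntegral_convergent hb hcb
  have h1 : IntegrableOn (fun t : ℝ => (t:ℂ) ^ (b-1) * (1 - (t:ℂ)) ^ (c-b-1)) (Ioc (0:ℝ) 1) :=
    h.1
  exact h1.mono_set Ioo_subset_Ioc_self

lemma psi_continuousOn {x : ℂ} (s : ℂ) (hx : x.im ≠ 0 ∨ x.re < 1) :
    ContinuousOn (fun t : ℝ => (1 - x * t) ^ s) (Ioo (0:ℝ) 1) := by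
  intro t ht
  have hslit : (1 - x * t) ∈ slitPlane := one_sub_mul_mem_slitPlane hx ht.1.le ht.2.le
  have hc : ContinuousAt (fun t : ℝ => 1 - x * (t:ℂ)) t := by fun_prop
  exact (ContinuousAt.cpow hc continuousAt_const hslit).continuousWithinAt

lemma integrable_integrand (hb : 0 < b.re) (hcb : 0 < (c - b).re) {x : ℂ} (s : ℂ)
    (hx : x.im ≠ 0 ∨ x.re < 1) :
    IntegrableOn (fun t : ℝ => (t:ℂ) ^ (b-1) * (1 - (t:ℂ)) ^ (c-b-1) * (1 - x * t) ^ s)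
      (Ioo (0:ℝ) 1) := by
  obtain ⟨ε, hε, δ, hδ, R, hsub, hloc⟩ := euler_localization hx
  set C := max (δ ^ s.re) (R ^ s.re) * Real.exp (Real.pi * |s.im|) with hC
  have hxball : x ∈ Metric.closedBall x ε := Metric.mem_closedBall_self hε.le
  have hbd : ∀ t ∈ Ioo (0:ℝ) 1, ‖(1 - x * t) ^ s‖ ≤ C := by
    intro t ht
    obtain ⟨_, h1, h2⟩ := hloc x hxball t ⟨ht.1.le, ht.2.le⟩
    exact norm_cpow_bound s hδ h1 h2
  have hmeas : AEStronglyMeasurable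
      (fun t : ℝ => (t:ℂ) ^ (b-1) * (1 - (t:ℂ)) ^ (c-b-1) * (1 - x * t) ^ s)
      (volume.restrict (Ioo (0:ℝ) 1)) :=
    ((integrable_phi hb hcb).aestronglyMeasurable).mul
      ((psi_continuousOn s hx).aestronglyMeasurable measurableSet_Ioo)
  refine Integrable.mono' (((integrable_phi hb hcb).norm).const_mul C) hmeas ?_
  rw [ae_restrict_iff' measurableSet_Ioo]
  refine Filter.Eventually.of_forall (fun t ht => ?_)
  rw [norm_mul]
  calc ‖(t:ℂ) ^ (b-1) * (1 - (t:ℂ)) ^ (c-b-1)‖ * ‖(1 - x * t) ^ s‖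
      ≤ ‖(t:ℂ) ^ (b-1) * (1 - (t:ℂ)) ^ (c-b-1)‖ * C :=
        mul_le_mul_of_nonneg_left (hbd t ht) (norm_nonneg _)
    _ = C * ‖(t:ℂ) ^ (b-1) * (1 - (t:ℂ)) ^ (c-b-1)‖ := by ring

lemma euler_differentiableOn (hb : 0 < b.re) (hcb : 0 < (c - b).re) (a : ℂ) :
    DifferentiableOn ℂ
      (fun x : ℂ => ∫ t in Ioo (0:ℝ) 1,
        (t:ℂ) ^ (b-1) * (1 - (t:ℂ)) ^ (c-b-1) * (1 - x * t) ^ (-a))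
      {z : ℂ | z.im ≠ 0 ∨ z.re < 1} := by
  intro x₀ hx₀
  obtain ⟨ε, hε, δ, hδ, R, hsub, hloc⟩ := euler_localization hx₀
  set C := max (δ ^ (-a-1).re) (R ^ (-a-1).re) * Real.exp (Real.pi * |(-a-1).im|) with hC
  set Φ : ℝ → ℂ := fun t => (t:ℂ) ^ (b-1) * (1 - (t:ℂ)) ^ (c-b-1) with hΦ
  set F' : ℂ → ℝ → ℂ :=
    fun x t => Φ t * (-a * (1 - x * t) ^ (-a - 1) * (-(t:ℂ))) with hF'
  have hC0 : 0 ≤ C := by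
    rw [hC]
    have : 0 ≤ max (δ ^ (-a-1).re) (R ^ (-a-1).re) :=
      le_max_iff.mpr (Or.inl (Real.rpow_nonneg hδ.le _))
    positivity
  have key := hasDerivAt_integral_of_dominated_loc_of_deriv_le (μ := volume.restrict (Ioo (0:ℝ) 1))
    (F := fun x t => Φ t * (1 - x * t) ^ (-a)) (F' := F') (x₀ := x₀)
    (bound := fun t => ‖Φ t‖ * (‖a‖ * C)) (Metric.ball_mem_nhds x₀ hε) ?_ ?_ ?_ ?_ ?_ ?_
  · exact (key.2.differentiableAt).differentiableWithinAt
  · -- measurability of F x for x near x₀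
    filter_upwards [isOpen_S.mem_nhds hx₀] with x hx
    exact ((integrable_phi hb hcb).aestronglyMeasurable).mul
      ((psi_continuousOn (-a) hx).aestronglyMeasurable measurableSet_Ioo)
  · exact integrable_integrand hb hcb (-a) hx₀
  · -- measurability of F' x₀
    refine ((integrable_phi hb hcb).aestronglyMeasurable).mul ?_
    refine AEStronglyMeasurable.mul ?_ ?_
    · exact ((psi_continuousOn (-a-1) hx₀).const_smul (-a)).aestronglyMeasurable measurableSet_Ioo
        |>.congr (Filter.EventuallyEq.of_eq (by funext t; simp [smul_eq_mul]))
    · exact (Complex.continuous_ofReal.neg).aestronglyMeasurable.restrict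
  · -- bound
    rw [ae_restrict_iff' measurableSet_Ioo]
    refine Filter.Eventually.of_forall (fun t ht x hxb => ?_)
    have hxcb : x ∈ Metric.closedBall x₀ ε := Metric.ball_subset_closedBall hxb
    obtain ⟨_, h1, h2⟩ := hloc x hxcb t ⟨ht.1.le, ht.2.le⟩
    rw [hF']
    simp only [norm_mul, norm_neg]
    have e1 : ‖(1 - x * t) ^ (-a - 1)‖ ≤ C := norm_cpow_bound (-a-1) hδ h1 h2
    have e2 : ‖(t:ℂ)‖ ≤ 1 := by
      rw [Complex.norm_real, Real.norm_eq_abs, _root_.abs_of_nonneg ht.1.le]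
      exact ht.2.le
    calc ‖Φ t‖ * (‖a‖ * ‖(1 - x * t) ^ (-a - 1)‖ * ‖(t:ℂ)‖)
        ≤ ‖Φ t‖ * (‖a‖ * C * 1) := by
          refine mul_le_mul_of_nonneg_left ?_ (norm_nonneg _)
          exact mul_le_mul (mul_le_mul_of_nonneg_left e1 (norm_nonneg a)) e2 (norm_nonneg _)
            (by positivity)
      _ = ‖Φ t‖ * (‖a‖ * C) := by ring
  · exact ((integrable_phi hb hcb).norm).mul_const (‖a‖ * C)
  · -- differentiability in x
    rw [ae_restrict_iff' measurableSet_Ioo]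
    refine Filter.Eventually.of_forall (fun t ht x hxb => ?_)
    have hxcb : x ∈ Metric.closedBall x₀ ε := Metric.ball_subset_closedBall hxb
    obtain ⟨hslit, _, _⟩ := hloc x hxcb t ⟨ht.1.le, ht.2.le⟩
    have d1 : HasDerivAt (fun x : ℂ => 1 - x * t) (-(t:ℂ)) x := by
      simpa using ((hasDerivAt_id x).mul_const (t:ℂ)).const_sub 1
    have d2 := HasDerivAt.cpow_const d1 hslit (c := -a)
    exact d2.const_mul (Φ t)

lemma euler_integral_eq_series {a b c x : ℂ} (hb : 0 < b.re) (hcb : b.re < c.re)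
    (hx : ‖x‖ < 1) :
    Complex.Gamma c / (Complex.Gamma b * Complex.Gamma (c - b))
        * ∫ t in Ioo (0 : ℝ) 1,
            (t : ℂ) ^ (b - 1) * (1 - (t : ℂ)) ^ (c - b - 1) * (1 - x * t) ^ (-a)
      = hyp2F1Series a b c x := by
  have hcb' : 0 < (c - b).re := by simp only [sub_re]; linarith
  have hc : 0 < c.re := lt_trans hb hcb
  set Φ : ℝ → ℂ := fun t => (t:ℂ) ^ (b-1) * (1 - (t:ℂ)) ^ (c-b-1) with hΦ
  set G : ℕ → ℝ → ℂ :=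
    fun k t => Φ t * ((ascPochhammer ℂ k).eval a / k.factorial * (x * t) ^ k) with hG
  -- pointwise expansion
  have hpt : ∀ t ∈ Ioo (0:ℝ) 1,
      HasSum (fun k => G k t) (Φ t * (1 - x * t) ^ (-a)) := by
    intro t ht
    have hxt : ‖x * (t:ℂ)‖ < 1 := by
      rw [norm_mul, Complex.norm_real, Real.norm_eq_abs, _root_.abs_of_nonneg ht.1.le]
      calc ‖x‖ * t ≤ 1 * t := mul_le_mul_of_nonneg_right hx.le ht.1.le
        _ = t := one_mul t
        _ < 1 := ht.2
    exact (binomial_hasSum a hxt).mul_left (Φ t)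
  -- each term is integrable
  have hGint : ∀ k : ℕ, IntegrableOn (G k) (Ioo (0:ℝ) 1) := by
    intro k
    refine Integrable.mono'
      (((integrable_phi hb hcb').norm).const_mul
        (‖(ascPochhammer ℂ k).eval a / k.factorial‖ * ‖x‖ ^ k)) ?_ ?_
    · exact ((integrable_phi hb hcb').aestronglyMeasurable).mul
        (Continuous.aestronglyMeasurable (by fun_prop)).restrict
    · rw [ae_restrict_iff' measurableSet_Ioo]
      refine Filter.Eventually.of_forall (fun t ht => ?_)
      have e2 : ‖(t:ℂ)‖ ≤ 1 := by
        rw [Complex.norm_real, Real.norm_eq_abs, _root_.abs_of_nonneg ht.1.le]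
        exact ht.2.le
      calc ‖G k t‖
          = ‖Φ t‖ * ‖(ascPochhammer ℂ k).eval a / k.factorial * (x * t) ^ k‖ := norm_mul _ _
        _ ≤ ‖Φ t‖ * (‖(ascPochhammer ℂ k).eval a / k.factorial‖ * ‖x‖ ^ k) := by
            refine mul_le_mul_of_nonneg_left ?_ (norm_nonneg _)
            rw [norm_mul, norm_pow, norm_mul]
            refine mul_le_mul_of_nonneg_left ?_ (norm_nonneg _)
            calc (‖x‖ * ‖(t:ℂ)‖) ^ k ≤ (‖x‖ * 1) ^ k :=
                  pow_le_pow_left₀ (by positivity)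
                    (mul_le_mul_of_nonneg_left e2 (norm_nonneg x)) k
              _ = ‖x‖ ^ k := by rw [mul_one]
        _ = (‖(ascPochhammer ℂ k).eval a / k.factorial‖ * ‖x‖ ^ k) * ‖Φ t‖ := by ring
  -- summability of the integrals of norms
  have hsum : Summable (fun k => ∫ t in Ioo (0:ℝ) 1, ‖G k t‖) := by
    set B := ∫ t in Ioo (0:ℝ) 1, ‖Φ t‖ with hB
    have hB0 : 0 ≤ B := integral_nonneg (fun t => norm_nonneg _)
    have hmaj : Summable (fun k : ℕ =>
        (‖(ascPochhammer ℂ k).eval a‖ / k.factorial * ‖x‖ ^ k) * B) := by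
      refine Summable.mul_right B ?_
      exact (summable_poch_geom a 0 (norm_nonneg x) hx).congr (fun k => by simp)
    refine Summable.of_nonneg_of_le
      (fun k => integral_nonneg (fun t => norm_nonneg _)) (fun k => ?_) hmaj
    have hle : ∀ t ∈ Ioo (0:ℝ) 1,
        ‖G k t‖ ≤ ‖(ascPochhammer ℂ k).eval a‖ / k.factorial * ‖x‖ ^ k * ‖Φ t‖ := by
      intro t ht
      have e2 : ‖(t:ℂ)‖ ≤ 1 := by
        rw [Complex.norm_real, Real.norm_eq_abs, _root_.abs_of_nonneg ht.1.le]
        exact ht.2.le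
      rw [← norm_poch_coeff]
      calc ‖G k t‖
          = ‖Φ t‖ * ‖(ascPochhammer ℂ k).eval a / k.factorial * (x * t) ^ k‖ := norm_mul _ _
        _ ≤ ‖Φ t‖ * (‖(ascPochhammer ℂ k).eval a / k.factorial‖ * ‖x‖ ^ k) := by
            refine mul_le_mul_of_nonneg_left ?_ (norm_nonneg _)
            rw [norm_mul, norm_pow, norm_mul]
            refine mul_le_mul_of_nonneg_left ?_ (norm_nonneg _)
            calc (‖x‖ * ‖(t:ℂ)‖) ^ k ≤ (‖x‖ * 1) ^ k :=
                  pow_le_pow_left₀ (by positivity)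
                    (mul_le_mul_of_nonneg_left e2 (norm_nonneg x)) k
              _ = ‖x‖ ^ k := by rw [mul_one]
        _ = (‖(ascPochhammer ℂ k).eval a / k.factorial‖ * ‖x‖ ^ k) * ‖Φ t‖ := by ring
    calc (∫ t in Ioo (0:ℝ) 1, ‖G k t‖)
        ≤ ∫ t in Ioo (0:ℝ) 1,
            ‖(ascPochhammer ℂ k).eval a‖ / k.factorial * ‖x‖ ^ k * ‖Φ t‖ := by
          refine integral_mono_of_nonneg (Filter.Eventually.of_forall (fun t => norm_nonneg _))
            (((integrable_phi hb hcb').norm).const_mul _) ?_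
          exact (ae_restrict_iff' measurableSet_Ioo).mpr (Filter.Eventually.of_forall hle)
      _ = (‖(ascPochhammer ℂ k).eval a‖ / k.factorial * ‖x‖ ^ k) * B := by
          rw [hB, ← integral_const_mul]
  -- swap sum and integral
  have hswap : (∫ t in Ioo (0 : ℝ) 1, Φ t * (1 - x * t) ^ (-a))
      = ∑' k, ∫ t in Ioo (0:ℝ) 1, G k t := by
    have h1 : (∫ t in Ioo (0 : ℝ) 1, Φ t * (1 - x * t) ^ (-a))
        = ∫ t in Ioo (0:ℝ) 1, ∑' k, G k t := by
      refine setIntegral_congr_fun measurableSet_Ioo (fun t ht => ?_)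
      exact ((hpt t ht).tsum_eq).symm
    rw [h1]
    exact (integral_tsum_of_summable_integral_norm hGint hsum).symm
  -- evaluate each integral as a Beta integral
  have hbk : ∀ k : ℕ, (∫ t in Ioo (0:ℝ) 1, G k t)
      = (ascPochhammer ℂ k).eval a / k.factorial * x ^ k
        * Complex.betaIntegral (b + k) (c - b) := by
    intro k
    have h2 : Complex.betaIntegral (b + k) (c - b)
        = ∫ t in Ioo (0:ℝ) 1, (t:ℂ) ^ (b + k - 1) * (1 - (t:ℂ)) ^ (c - b - 1) := by
      rw [Complex.betaIntegral, intervalIntegral.integral_of_le zero_le_one,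
        integral_Ioc_eq_integral_Ioo]
    have h3 : ∀ t ∈ Ioo (0:ℝ) 1,
        G k t = ((ascPochhammer ℂ k).eval a / k.factorial * x ^ k)
          * ((t:ℂ) ^ (b + k - 1) * (1 - (t:ℂ)) ^ (c - b - 1)) := by
      intro t ht
      have ht0 : (t:ℂ) ≠ 0 := by
        exact_mod_cast ne_of_gt ht.1
      have e1 : (t:ℂ) ^ (b + k - 1) = (t:ℂ) ^ (b - 1) * (t:ℂ) ^ (k:ℕ) := by
        rw [show b + (k:ℂ) - 1 = (b - 1) + (k:ℕ) by push_cast; ring,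
          cpow_add _ _ ht0, cpow_natCast]
      rw [hG, e1]
      simp only
      rw [mul_pow]
      ring
    rw [setIntegral_congr_fun measurableSet_Ioo h3, integral_const_mul, h2]
  -- assemble
  rw [show (∫ t in Ioo (0 : ℝ) 1,
      (t : ℂ) ^ (b - 1) * (1 - (t : ℂ)) ^ (c - b - 1) * (1 - x * t) ^ (-a))
    = ∫ t in Ioo (0 : ℝ) 1, Φ t * (1 - x * t) ^ (-a) from rfl, hswap, ← tsum_mul_left]
  rw [hyp2F1Series]
  refine tsum_congr (fun k => ?_)
  rw [hbk k]
  have h4 := gamma_beta_coeff hb hcb k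
  have npc : (ascPochhammer ℂ k).eval c ≠ 0 := poch_ne_zero hc k
  have nfac : ((k.factorial : ℕ) : ℂ) ≠ 0 := by
    exact_mod_cast Nat.cast_ne_zero.mpr k.factorial_ne_zero
  calc Complex.Gamma c / (Complex.Gamma b * Complex.Gamma (c - b))
        * ((ascPochhammer ℂ k).eval a / k.factorial * x ^ k
          * Complex.betaIntegral (b + k) (c - b))
      = ((ascPochhammer ℂ k).eval a / k.factorial * x ^ k)
        * (Complex.Gamma c / (Complex.Gamma b * Complex.Gamma (c - b))
          * Complex.betaIntegral (b + k) (c - b)) := by ring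
    _ = ((ascPochhammer ℂ k).eval a / k.factorial * x ^ k)
        * ((ascPochhammer ℂ k).eval b / (ascPochhammer ℂ k).eval c) := by rw [h4]
    _ = ((ascPochhammer ℂ k).eval a * (ascPochhammer ℂ k).eval b
        / ((ascPochhammer ℂ k).eval c * (k.factorial : ℂ))) * x ^ k := by
      field_simp

end integrand
end EulerAux

/-- Euler's integral representation of the Gauss hypergeometric function:
for `Re c > Re b > 0` and `x ∉ [1,∞)`,
`₂F₁(a,b;c;x) = Γ(c)/(Γ(b)Γ(c-b)) ∫_0^1 t^{b-1} (1-t)^{c-b-1} (1-xt)^{-a} dt`. -/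
theorem hyp2F1_eq_euler_integral
    (a b c x : ℂ) (hb : 0 < b.re) (hcb : b.re < c.re)
    (hx : x.im ≠ 0 ∨ x.re < 1)
    (F : ℂ → ℂ) (hF : IsHyp2F1 a b c F) :
    F x = Complex.Gamma c / (Complex.Gamma b * Complex.Gamma (c - b))
        * ∫ t in Set.Ioo (0 : ℝ) 1,
            (t : ℂ) ^ (b - 1) * (1 - (t : ℂ)) ^ (c - b - 1) * (1 - x * t) ^ (-a) := by
  obtain ⟨hFd, hFs⟩ := hF
  have hcb' : 0 < (c - b).re := by simp only [Complex.sub_re]; linarith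
  set G : ℂ → ℂ := fun y => Complex.Gamma c / (Complex.Gamma b * Complex.Gamma (c - b))
      * ∫ t in Set.Ioo (0 : ℝ) 1,
          (t : ℂ) ^ (b - 1) * (1 - (t : ℂ)) ^ (c - b - 1) * (1 - y * t) ^ (-a) with hG
  have hGd : DifferentiableOn ℂ G {z : ℂ | z.im ≠ 0 ∨ z.re < 1} :=
    (euler_differentiableOn hb hcb' a).const_mul _
  have hGs : ∀ y : ℂ, ‖y‖ < 1 → G y = hyp2F1Series a b c y := fun y hy =>
    euler_integral_eq_series hb hcb hy
  have h0 : (0 : ℂ) ∈ {z : ℂ | z.im ≠ 0 ∨ z.re < 1} := by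
    simp [Set.mem_setOf_eq]
  have hFG : F =ᶠ[nhds 0] G := by
    filter_upwards [Metric.ball_mem_nhds (0 : ℂ) one_pos] with y hy
    rw [hFs y (mem_ball_zero_iff.mp hy), hGs y (mem_ball_zero_iff.mp hy)]
  have heq := (hFd.analyticOnNhd isOpen_S).eqOn_of_preconnected_of_eventuallyEq
    (hGd.analyticOnNhd isOpen_S) isPreconnected_S h0 hFG
  exact heq hx
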